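/- There exists a 2-dimensional configuration p of 6 points in general position in ℝ² such that the bar framework (K_{3,3}, p) on the complete bipartite graph K_{3,3} is universally rigid; in particular, there is a universally rigid 2-dimensional bar framework in general position in ℝ² whose graph contains no triangle. -/

import Mathlib

open Matrix

/-- A configuration `p` in `ℝ^r` is `r`-dimensional if its points affinely span `ℝ^r`. -/
def IsRDimensional {V : Type*} {r : ℕ} (p : V → EuclideanSpace ℝ (Fin r)) : Prop :=
  affineSpan ℝ (Set.range p) = ⊤

/-- A configuration is in general position in `ℝ^r` if every `r+1` of its points are
affinely independent. -/
def InGeneralPosition {V : Type*} [DecidableEq V] {r : ℕ}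
    (p : V → EuclideanSpace ℝ (Fin r)) : Prop :=
  ∀ s : Finset V, s.card = r + 1 → AffineIndependent ℝ (fun i : s => p i)

/-- `(G, q)` is equivalent to `(G, p)`: corresponding edge lengths agree. -/
def FrameworkEquiv {V : Type*} {r r' : ℕ} (G : SimpleGraph V)
    (p : V → EuclideanSpace ℝ (Fin r)) (q : V → EuclideanSpace ℝ (Fin r')) : Prop :=
  ∀ i j : V, G.Adj i j → ‖q i - q j‖ = ‖p i - p j‖

/-- Two configurations are congruent: all pairwise distances agree. -/
def ConfigCongruent {V : Type*} {r r' : ℕ} (p : V → EuclideanSpace ℝ (Fin r))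
    (q : V → EuclideanSpace ℝ (Fin r')) : Prop :=
  ∀ i j : V, ‖q i - q j‖ = ‖p i - p j‖

/-- `(G, p)` is universally rigid: for every `1 ≤ r' ≤ n - 1` (where `n` is the number of
nodes), every `r'`-dimensional framework `(G, q)` equivalent to `(G, p)` is congruent to it. -/
def UniversallyRigid {V : Type*} [Fintype V] {r : ℕ} (G : SimpleGraph V)
    (p : V → EuclideanSpace ℝ (Fin r)) : Prop :=
  ∀ r' : ℕ, 1 ≤ r' → r' ≤ Fintype.card V - 1 → ∀ q : V → EuclideanSpace ℝ (Fin r'),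
    IsRDimensional q → FrameworkEquiv G p q → ConfigCongruent p q

/-- An explicit point of `ℝ²`. -/
def pt (a b : ℝ) : EuclideanSpace ℝ (Fin 2) := WithLp.toLp 2 ![a, b]

@[simp] lemma pt_zero (a b : ℝ) : pt a b 0 = a := rfl
@[simp] lemma pt_one (a b : ℝ) : pt a b 1 = b := rfl
@[simp] lemma vec3_two {α : Type*} (a b c : α) : ![a, b, c] 2 = c := rfl

/-- The hexagonal configuration for `K₃,₃`. -/
def P : (Fin 3 ⊕ Fin 3) → EuclideanSpace ℝ (Fin 2) :=
  Sum.elim ![pt 2 0, pt (-1) 1, pt (-1) (-1)] ![pt 1 1, pt (-2) 0, pt 1 (-1)]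

lemma esq {n : ℕ} (v : EuclideanSpace ℝ (Fin n)) : ‖v‖ ^ 2 = ∑ k, (v k) ^ 2 := by
  rw [EuclideanSpace.norm_eq, Real.sq_sqrt (by positivity)]
  simp [Real.norm_eq_abs, sq_abs]

lemma esq' {n : ℕ} (x y : EuclideanSpace ℝ (Fin n)) :
    ‖x - y‖ ^ 2 = ∑ k, (x k - y k) ^ 2 := by
  rw [esq]; rfl

lemma key {E : Type*} [NormedAddCommGroup E] [InnerProductSpace ℝ E] {u w : E}
    (hu : ‖u‖ ^ 2 = 2) (hw : ‖w‖ ^ 2 = 4) (huw : ‖w - u‖ ^ 2 = 2) (m n : ℝ) :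
    ‖m • u + n • w‖ ^ 2 = 2 * m ^ 2 + 4 * m * n + 4 * n ^ 2 := by
  have hwu : (inner ℝ w u : ℝ) = 2 := by
    have h := norm_sub_sq_real w u
    rw [hu, hw, huw] at h; linarith
  have huw' : (inner ℝ u w : ℝ) = 2 := by rw [real_inner_comm]; exact hwu
  have h2 := norm_add_sq_real (m • u) (n • w)
  rw [real_inner_smul_left, real_inner_smul_right, huw', norm_smul, norm_smul, mul_pow, mul_pow,
    Real.norm_eq_abs, Real.norm_eq_abs, sq_abs, sq_abs, hu, hw] at h2
  rw [h2]; ring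

lemma affInd_of_det {a b c : EuclideanSpace ℝ (Fin 2)}
    (h : (b 0 - a 0) * (c 1 - a 1) - (b 1 - a 1) * (c 0 - a 0) ≠ 0) :
    AffineIndependent ℝ ![a, b, c] := by
  rw [affineIndependent_iff_not_collinear]
  intro hc
  have ha : a ∈ Set.range ![a, b, c] := ⟨0, rfl⟩
  rw [collinear_iff_of_mem ha] at hc
  obtain ⟨v, hv⟩ := hc
  obtain ⟨tb, htb⟩ := hv b ⟨1, rfl⟩
  obtain ⟨tc, htc⟩ := hv c ⟨2, rfl⟩
  apply h
  have hb0 : b 0 = tb * v 0 + a 0 := by rw [htb]; rfl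
  have hb1 : b 1 = tb * v 1 + a 1 := by rw [htb]; rfl
  have hc0 : c 0 = tc * v 0 + a 0 := by rw [htc]; rfl
  have hc1 : c 1 = tc * v 1 + a 1 := by rw [htc]; rfl
  rw [hb0, hb1, hc0, hc1]; ring

lemma hall : ∀ v : Fin 3 ⊕ Fin 3, v = Sum.inl 0 ∨ v = Sum.inl 1 ∨ v = Sum.inl 2 ∨
    v = Sum.inr 0 ∨ v = Sum.inr 1 ∨ v = Sum.inr 2 := by decide

lemma triple : ∀ i j k : Fin 3 ⊕ Fin 3, i ≠ j → i ≠ k → j ≠ k →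
    AffineIndependent ℝ ![P i, P j, P k] := by
  intro i j k hij hik hjk
  rcases hall i with rfl | rfl | rfl | rfl | rfl | rfl <;>
    rcases hall j with rfl | rfl | rfl | rfl | rfl | rfl <;>
      rcases hall k with rfl | rfl | rfl | rfl | rfl | rfl <;>
        first
          | exact absurd rfl hij
          | exact absurd rfl hik
          | exact absurd rfl hjk
          | (apply affInd_of_det; norm_num [P])

set_option maxHeartbeats 4000000 in
/-- There is a `2`-dimensional configuration `p` of the six nodes of the complete bipartite
graph `K₃,₃`, in general position in `ℝ²`, such that the framework `(K₃,₃, p)` is universally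
rigid; in particular, since `K₃,₃` is triangle-free, there is a universally rigid
`2`-dimensional framework in general position in `ℝ²` whose graph contains no triangle. -/
theorem exists_universally_rigid_K33_framework :
    ∃ p : (Fin 3 ⊕ Fin 3) → EuclideanSpace ℝ (Fin 2),
      IsRDimensional p ∧ InGeneralPosition p ∧
      UniversallyRigid (completeBipartiteGraph (Fin 3) (Fin 3)) p ∧
      (completeBipartiteGraph (Fin 3) (Fin 3)).CliqueFree 3 := by
  classical
  refine ⟨P, ?_, ?_, ?_, ?_⟩
  · -- IsRDimensional
    have h3 : AffineIndependent ℝ ![P (Sum.inl 0), P (Sum.inr 0), P (Sum.inr 1)] :=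
      triple _ _ _ (by simp) (by simp) (by simp)
    have htop : affineSpan ℝ (Set.range ![P (Sum.inl 0), P (Sum.inr 0), P (Sum.inr 1)]) = ⊤ :=
      h3.affineSpan_eq_top_iff_card_eq_finrank_add_one.mpr (by simp)
    have hsub : Set.range ![P (Sum.inl 0), P (Sum.inr 0), P (Sum.inr 1)] ⊆ Set.range P := by
      rintro x ⟨m, rfl⟩
      fin_cases m
      · exact ⟨Sum.inl 0, rfl⟩
      · exact ⟨Sum.inr 0, rfl⟩
      · exact ⟨Sum.inr 1, rfl⟩
    have hle := affineSpan_mono ℝ hsub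
    rw [htop] at hle
    exact top_unique hle
  · -- InGeneralPosition
    intro s hs
    have hcard : s.card = 3 := hs
    let e := s.equivFinOfCardEq hcard
    have heq : (fun x : s => P ↑x) ∘ ⇑e.symm =
        ![P ↑(e.symm 0), P ↑(e.symm 1), P ↑(e.symm 2)] := by
      funext m; fin_cases m <;> rfl
    have hai : AffineIndependent ℝ ((fun x : s => P ↑x) ∘ ⇑e.symm) := by
      rw [heq]
      refine triple _ _ _ ?_ ?_ ?_ <;>
        · intro hcontra
          have h01 := e.symm.injective (Subtype.coe_injective hcontra)
          exact absurd h01 (by decide)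
    exact (affineIndependent_equiv e.symm).mp hai
  · -- UniversallyRigid
    intro r' _ _ q _ hequiv
    have E1 : ∑ k, (q (Sum.inl 0) k - q (Sum.inr 0) k) ^ 2 = 2 := by
      have h := hequiv (Sum.inl 0) (Sum.inr 0) (by simp)
      calc ∑ k, (q (Sum.inl 0) k - q (Sum.inr 0) k) ^ 2 = ‖q (Sum.inl 0) - q (Sum.inr 0)‖ ^ 2 := (esq' _ _).symm
        _ = ‖P (Sum.inl 0) - P (Sum.inr 0)‖ ^ 2 := by rw [h]
        _ = 2 := by rw [esq']; norm_num [Fin.sum_univ_two, P]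
    have E2 : ∑ k, (q (Sum.inr 0) k - q (Sum.inl 1) k) ^ 2 = 4 := by
      have h := hequiv (Sum.inr 0) (Sum.inl 1) (by simp)
      calc ∑ k, (q (Sum.inr 0) k - q (Sum.inl 1) k) ^ 2 = ‖q (Sum.inr 0) - q (Sum.inl 1)‖ ^ 2 := (esq' _ _).symm
        _ = ‖P (Sum.inr 0) - P (Sum.inl 1)‖ ^ 2 := by rw [h]
        _ = 4 := by rw [esq']; norm_num [Fin.sum_univ_two, P]
    have E3 : ∑ k, (q (Sum.inl 1) k - q (Sum.inr 1) k) ^ 2 = 2 := by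
      have h := hequiv (Sum.inl 1) (Sum.inr 1) (by simp)
      calc ∑ k, (q (Sum.inl 1) k - q (Sum.inr 1) k) ^ 2 = ‖q (Sum.inl 1) - q (Sum.inr 1)‖ ^ 2 := (esq' _ _).symm
        _ = ‖P (Sum.inl 1) - P (Sum.inr 1)‖ ^ 2 := by rw [h]
        _ = 2 := by rw [esq']; norm_num [Fin.sum_univ_two, P]
    have E4 : ∑ k, (q (Sum.inr 1) k - q (Sum.inl 2) k) ^ 2 = 2 := by
      have h := hequiv (Sum.inr 1) (Sum.inl 2) (by simp)
      calc ∑ k, (q (Sum.inr 1) k - q (Sum.inl 2) k) ^ 2 = ‖q (Sum.inr 1) - q (Sum.inl 2)‖ ^ 2 := (esq' _ _).symm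
        _ = ‖P (Sum.inr 1) - P (Sum.inl 2)‖ ^ 2 := by rw [h]
        _ = 2 := by rw [esq']; norm_num [Fin.sum_univ_two, P]
    have E5 : ∑ k, (q (Sum.inl 2) k - q (Sum.inr 2) k) ^ 2 = 4 := by
      have h := hequiv (Sum.inl 2) (Sum.inr 2) (by simp)
      calc ∑ k, (q (Sum.inl 2) k - q (Sum.inr 2) k) ^ 2 = ‖q (Sum.inl 2) - q (Sum.inr 2)‖ ^ 2 := (esq' _ _).symm
        _ = ‖P (Sum.inl 2) - P (Sum.inr 2)‖ ^ 2 := by rw [h]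
        _ = 4 := by rw [esq']; norm_num [Fin.sum_univ_two, P]
    have E6 : ∑ k, (q (Sum.inr 2) k - q (Sum.inl 0) k) ^ 2 = 2 := by
      have h := hequiv (Sum.inr 2) (Sum.inl 0) (by simp)
      calc ∑ k, (q (Sum.inr 2) k - q (Sum.inl 0) k) ^ 2 = ‖q (Sum.inr 2) - q (Sum.inl 0)‖ ^ 2 := (esq' _ _).symm
        _ = ‖P (Sum.inr 2) - P (Sum.inl 0)‖ ^ 2 := by rw [h]
        _ = 2 := by rw [esq']; norm_num [Fin.sum_univ_two, P]
    have E7 : ∑ k, (q (Sum.inl 0) k - q (Sum.inr 1) k) ^ 2 = 16 := by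
      have h := hequiv (Sum.inl 0) (Sum.inr 1) (by simp)
      calc ∑ k, (q (Sum.inl 0) k - q (Sum.inr 1) k) ^ 2 = ‖q (Sum.inl 0) - q (Sum.inr 1)‖ ^ 2 := (esq' _ _).symm
        _ = ‖P (Sum.inl 0) - P (Sum.inr 1)‖ ^ 2 := by rw [h]
        _ = 16 := by rw [esq']; norm_num [Fin.sum_univ_two, P]
    have E8 : ∑ k, (q (Sum.inr 0) k - q (Sum.inl 2) k) ^ 2 = 8 := by
      have h := hequiv (Sum.inr 0) (Sum.inl 2) (by simp)
      calc ∑ k, (q (Sum.inr 0) k - q (Sum.inl 2) k) ^ 2 = ‖q (Sum.inr 0) - q (Sum.inl 2)‖ ^ 2 := (esq' _ _).symm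
        _ = ‖P (Sum.inr 0) - P (Sum.inl 2)‖ ^ 2 := by rw [h]
        _ = 8 := by rw [esq']; norm_num [Fin.sum_univ_two, P]
    have E9 : ∑ k, (q (Sum.inl 1) k - q (Sum.inr 2) k) ^ 2 = 8 := by
      have h := hequiv (Sum.inl 1) (Sum.inr 2) (by simp)
      calc ∑ k, (q (Sum.inl 1) k - q (Sum.inr 2) k) ^ 2 = ‖q (Sum.inl 1) - q (Sum.inr 2)‖ ^ 2 := (esq' _ _).symm
        _ = ‖P (Sum.inl 1) - P (Sum.inr 2)‖ ^ 2 := by rw [h]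
        _ = 8 := by rw [esq']; norm_num [Fin.sum_univ_two, P]
    have hsum : ∑ k, ((1/2) * (q (Sum.inl 0) k - q (Sum.inr 0) k + q (Sum.inl 1) k - q (Sum.inr 1) k + q (Sum.inl 2) k - q (Sum.inr 2) k) ^ 2 + (1/4) * (2 * q (Sum.inl 0) k - q (Sum.inr 0) k - q (Sum.inl 1) k + 2 * q (Sum.inr 1) k - q (Sum.inl 2) k - q (Sum.inr 2) k) ^ 2 + (3/4) * (q (Sum.inr 0) k - q (Sum.inl 1) k + q (Sum.inl 2) k - q (Sum.inr 2) k) ^ 2) = 0 := by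
      have step : ∀ k : Fin r', ((1/2) * (q (Sum.inl 0) k - q (Sum.inr 0) k + q (Sum.inl 1) k - q (Sum.inr 1) k + q (Sum.inl 2) k - q (Sum.inr 2) k) ^ 2 + (1/4) * (2 * q (Sum.inl 0) k - q (Sum.inr 0) k - q (Sum.inl 1) k + 2 * q (Sum.inr 1) k - q (Sum.inl 2) k - q (Sum.inr 2) k) ^ 2 + (3/4) * (q (Sum.inr 0) k - q (Sum.inl 1) k + q (Sum.inl 2) k - q (Sum.inr 2) k) ^ 2) =
          (q (Sum.inl 0) k - q (Sum.inr 0) k) ^ 2 + (q (Sum.inr 0) k - q (Sum.inl 1) k) ^ 2 + (q (Sum.inl 1) k - q (Sum.inr 1) k) ^ 2 + (q (Sum.inr 1) k - q (Sum.inl 2) k) ^ 2 + (q (Sum.inl 2) k - q (Sum.inr 2) k) ^ 2 + (q (Sum.inr 2) k - q (Sum.inl 0) k) ^ 2 - (1/2) * (q (Sum.inl 0) k - q (Sum.inr 1) k) ^ 2 - (1/2) * (q (Sum.inr 0) k - q (Sum.inl 2) k) ^ 2 - (1/2) * (q (Sum.inl 1) k - q (Sum.inr 2) k) ^ 2 :=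 fun k => by ring
      rw [Finset.sum_congr rfl (fun k _ => step k)]
      simp only [Finset.sum_add_distrib, Finset.sum_sub_distrib, ← Finset.mul_sum]
      rw [E1, E2, E3, E4, E5, E6, E7, E8, E9]
      norm_num
    have hzero : ∀ k : Fin r', (q (Sum.inl 0) k - q (Sum.inr 0) k + q (Sum.inl 1) k - q (Sum.inr 1) k + q (Sum.inl 2) k - q (Sum.inr 2) k) = 0 ∧ (2 * q (Sum.inl 0) k - q (Sum.inr 0) k - q (Sum.inl 1) k + 2 * q (Sum.inr 1) k - q (Sum.inl 2) k - q (Sum.inr 2) k) = 0 ∧ (q (Sum.inr 0) k - q (Sum.inl 1) k + q (Sum.inl 2) k - q (Sum.inr 2) k) = 0 := by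
      intro k
      have hnn : ∀ k ∈ (Finset.univ : Finset (Fin r')), (0:ℝ) ≤ (1/2) * (q (Sum.inl 0) k - q (Sum.inr 0) k + q (Sum.inl 1) k - q (Sum.inr 1) k + q (Sum.inl 2) k - q (Sum.inr 2) k) ^ 2 + (1/4) * (2 * q (Sum.inl 0) k - q (Sum.inr 0) k - q (Sum.inl 1) k + 2 * q (Sum.inr 1) k - q (Sum.inl 2) k - q (Sum.inr 2) k) ^ 2 + (3/4) * (q (Sum.inr 0) k - q (Sum.inl 1) k + q (Sum.inl 2) k - q (Sum.inr 2) k) ^ 2 :=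
        fun k _ => by positivity
      have h := (Finset.sum_eq_zero_iff_of_nonneg hnn).mp hsum k (Finset.mem_univ k)
      refine ⟨?_, ?_, ?_⟩
      · have h2 : (q (Sum.inl 0) k - q (Sum.inr 0) k + q (Sum.inl 1) k - q (Sum.inr 1) k + q (Sum.inl 2) k - q (Sum.inr 2) k) ^ 2 = 0 := by
          linarith [sq_nonneg (q (Sum.inl 0) k - q (Sum.inr 0) k + q (Sum.inl 1) k - q (Sum.inr 1) k + q (Sum.inl 2) k - q (Sum.inr 2) k), sq_nonneg (2 * q (Sum.inl 0) k - q (Sum.inr 0) k - q (Sum.inl 1) k + 2 * q (Sum.inr 1) k - q (Sum.inl 2) k - q (Sum.inr 2) k), sq_nonneg (q (Sum.inr 0) k - q (Sum.inl 1) k + q (Sum.inl 2) k - q (Sum.inr 2) k)]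
        exact pow_eq_zero_iff (by norm_num : (2:ℕ) ≠ 0) |>.mp h2
      · have h2 : (2 * q (Sum.inl 0) k - q (Sum.inr 0) k - q (Sum.inl 1) k + 2 * q (Sum.inr 1) k - q (Sum.inl 2) k - q (Sum.inr 2) k) ^ 2 = 0 := by
          linarith [sq_nonneg (q (Sum.inl 0) k - q (Sum.inr 0) k + q (Sum.inl 1) k - q (Sum.inr 1) k + q (Sum.inl 2) k - q (Sum.inr 2) k), sq_nonneg (2 * q (Sum.inl 0) k - q (Sum.inr 0) k - q (Sum.inl 1) k + 2 * q (Sum.inr 1) k - q (Sum.inl 2) k - q (Sum.inr 2) k), sq_nonneg (q (Sum.inr 0) k - q (Sum.inl 1) k + q (Sum.inl 2) k - q (Sum.inr 2) k)]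
        exact pow_eq_zero_iff (by norm_num : (2:ℕ) ≠ 0) |>.mp h2
      · have h2 : (q (Sum.inr 0) k - q (Sum.inl 1) k + q (Sum.inl 2) k - q (Sum.inr 2) k) ^ 2 = 0 := by
          linarith [sq_nonneg (q (Sum.inl 0) k - q (Sum.inr 0) k + q (Sum.inl 1) k - q (Sum.inr 1) k + q (Sum.inl 2) k - q (Sum.inr 2) k), sq_nonneg (2 * q (Sum.inl 0) k - q (Sum.inr 0) k - q (Sum.inl 1) k + 2 * q (Sum.inr 1) k - q (Sum.inl 2) k - q (Sum.inr 2) k), sq_nonneg (q (Sum.inr 0) k - q (Sum.inl 1) k + q (Sum.inl 2) k - q (Sum.inr 2) k)]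
        exact pow_eq_zero_iff (by norm_num : (2:ℕ) ≠ 0) |>.mp h2
    have hB1 : q (Sum.inr 1) =
        q (Sum.inl 0) - (2:ℝ) • q (Sum.inr 0) + (2:ℝ) • q (Sum.inl 1) := by
      ext k
      obtain ⟨h1, h2, h3⟩ := hzero k
      simp only [PiLp.sub_apply, PiLp.add_apply, PiLp.smul_apply, smul_eq_mul]
      linarith
    have hA2 : q (Sum.inl 2) =
        (2:ℝ) • q (Sum.inl 0) - (3:ℝ) • q (Sum.inr 0) + (2:ℝ) • q (Sum.inl 1) := by
      ext k
      obtain ⟨h1, h2, h3⟩ := hzero k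
      simp only [PiLp.sub_apply, PiLp.add_apply, PiLp.smul_apply, smul_eq_mul]
      linarith
    have hB2 : q (Sum.inr 2) =
        (2:ℝ) • q (Sum.inl 0) - (2:ℝ) • q (Sum.inr 0) + q (Sum.inl 1) := by
      ext k
      obtain ⟨h1, h2, h3⟩ := hzero k
      simp only [PiLp.sub_apply, PiLp.add_apply, PiLp.smul_apply, smul_eq_mul]
      linarith
    have hu2 : ‖q (Sum.inl 0) - q (Sum.inr 0)‖ ^ 2 = 2 := by rw [esq']; exact E1
    have hw2 : ‖q (Sum.inr 0) - q (Sum.inl 1)‖ ^ 2 = 4 := by rw [esq']; exact E2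
    have hd : q (Sum.inl 1) - q (Sum.inr 1) =
        (q (Sum.inr 0) - q (Sum.inl 1)) - (q (Sum.inl 0) - q (Sum.inr 0)) := by
      rw [hB1]; module
    have huw : ‖(q (Sum.inr 0) - q (Sum.inl 1)) - (q (Sum.inl 0) - q (Sum.inr 0))‖ ^ 2 = 2 := by
      rw [← hd, esq']; exact E3
    have main : ∀ (m n : ℝ) (i j : Fin 3 ⊕ Fin 3),
        q i - q j = m • (q (Sum.inl 0) - q (Sum.inr 0)) + n • (q (Sum.inr 0) - q (Sum.inl 1)) →
        2 * m ^ 2 + 4 * m * n + 4 * n ^ 2 = ‖P i - P j‖ ^ 2 →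
        ‖q i - q j‖ = ‖P i - P j‖ := by
      intro m n i j hx hval
      have h2 : ‖q i - q j‖ ^ 2 = ‖P i - P j‖ ^ 2 := by
        rw [hx, key hu2 hw2 huw, hval]
      calc ‖q i - q j‖ = Real.sqrt (‖q i - q j‖ ^ 2) := (Real.sqrt_sq (norm_nonneg _)).symm
        _ = Real.sqrt (‖P i - P j‖ ^ 2) := by rw [h2]
        _ = ‖P i - P j‖ := Real.sqrt_sq (norm_nonneg _)
    intro i j
    rcases hall i with rfl | rfl | rfl | rfl | rfl | rfl <;>
      rcases hall j with rfl | rfl | rfl | rfl | rfl | rfl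
    · exact main 0 0 _ _ (by first | (simp only [hB1, hA2, hB2]; module) | module) (by rw [esq']; norm_num [Fin.sum_univ_two, P])
    · exact main 1 1 _ _ (by first | (simp only [hB1, hA2, hB2]; module) | module) (by rw [esq']; norm_num [Fin.sum_univ_two, P])
    · exact main (-1) 2 _ _ (by first | (simp only [hB1, hA2, hB2]; module) | module) (by rw [esq']; norm_num [Fin.sum_univ_two, P])
    · exact main 1 0 _ _ (by first | (simp only [hB1, hA2, hB2]; module) | module) (by rw [esq']; norm_num [Fin.sum_univ_two, P])
    · exact main 0 2 _ _ (by first | (simp only [hB1, hA2, hB2]; module) | module) (by rw [esq']; norm_num [Fin.sum_univ_two, P])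
    · exact main (-1) 1 _ _ (by first | (simp only [hB1, hA2, hB2]; module) | module) (by rw [esq']; norm_num [Fin.sum_univ_two, P])
    · exact main (-1) (-1) _ _ (by first | (simp only [hB1, hA2, hB2]; module) | module) (by rw [esq']; norm_num [Fin.sum_univ_two, P])
    · exact main 0 0 _ _ (by first | (simp only [hB1, hA2, hB2]; module) | module) (by rw [esq']; norm_num [Fin.sum_univ_two, P])
    · exact main (-2) 1 _ _ (by first | (simp only [hB1, hA2, hB2]; module) | module) (by rw [esq']; norm_num [Fin.sum_univ_two, P])
    · exact main 0 (-1) _ _ (by first | (simp only [hB1, hA2, hB2]; module) | module) (by rw [esq']; norm_num [Fin.sum_univ_two, P])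
    · exact main (-1) 1 _ _ (by first | (simp only [hB1, hA2, hB2]; module) | module) (by rw [esq']; norm_num [Fin.sum_univ_two, P])
    · exact main (-2) 0 _ _ (by first | (simp only [hB1, hA2, hB2]; module) | module) (by rw [esq']; norm_num [Fin.sum_univ_two, P])
    · exact main 1 (-2) _ _ (by first | (simp only [hB1, hA2, hB2]; module) | module) (by rw [esq']; norm_num [Fin.sum_univ_two, P])
    · exact main 2 (-1) _ _ (by first | (simp only [hB1, hA2, hB2]; module) | module) (by rw [esq']; norm_num [Fin.sum_univ_two, P])
    · exact main 0 0 _ _ (by first | (simp only [hB1, hA2, hB2]; module) | module) (by rw [esq']; norm_num [Fin.sum_univ_two, P])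
    · exact main 2 (-2) _ _ (by first | (simp only [hB1, hA2, hB2]; module) | module) (by rw [esq']; norm_num [Fin.sum_univ_two, P])
    · exact main 1 0 _ _ (by first | (simp only [hB1, hA2, hB2]; module) | module) (by rw [esq']; norm_num [Fin.sum_univ_two, P])
    · exact main 0 (-1) _ _ (by first | (simp only [hB1, hA2, hB2]; module) | module) (by rw [esq']; norm_num [Fin.sum_univ_two, P])
    · exact main (-1) 0 _ _ (by first | (simp only [hB1, hA2, hB2]; module) | module) (by rw [esq']; norm_num [Fin.sum_univ_two, P])
    · exact main 0 1 _ _ (by first | (simp only [hB1, hA2, hB2]; module) | module) (by rw [esq']; norm_num [Fin.sum_univ_two, P])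
    · exact main (-2) 2 _ _ (by first | (simp only [hB1, hA2, hB2]; module) | module) (by rw [esq']; norm_num [Fin.sum_univ_two, P])
    · exact main 0 0 _ _ (by first | (simp only [hB1, hA2, hB2]; module) | module) (by rw [esq']; norm_num [Fin.sum_univ_two, P])
    · exact main (-1) 2 _ _ (by first | (simp only [hB1, hA2, hB2]; module) | module) (by rw [esq']; norm_num [Fin.sum_univ_two, P])
    · exact main (-2) 1 _ _ (by first | (simp only [hB1, hA2, hB2]; module) | module) (by rw [esq']; norm_num [Fin.sum_univ_two, P])
    · exact main 0 (-2) _ _ (by first | (simp only [hB1, hA2, hB2]; module) | module) (by rw [esq']; norm_num [Fin.sum_univ_two, P])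
    · exact main 1 (-1) _ _ (by first | (simp only [hB1, hA2, hB2]; module) | module) (by rw [esq']; norm_num [Fin.sum_univ_two, P])
    · exact main (-1) 0 _ _ (by first | (simp only [hB1, hA2, hB2]; module) | module) (by rw [esq']; norm_num [Fin.sum_univ_two, P])
    · exact main 1 (-2) _ _ (by first | (simp only [hB1, hA2, hB2]; module) | module) (by rw [esq']; norm_num [Fin.sum_univ_two, P])
    · exact main 0 0 _ _ (by first | (simp only [hB1, hA2, hB2]; module) | module) (by rw [esq']; norm_num [Fin.sum_univ_two, P])
    · exact main (-1) (-1) _ _ (by first | (simp only [hB1, hA2, hB2]; module) | module) (by rw [esq']; norm_num [Fin.sum_univ_two, P])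
    · exact main 1 (-1) _ _ (by first | (simp only [hB1, hA2, hB2]; module) | module) (by rw [esq']; norm_num [Fin.sum_univ_two, P])
    · exact main 2 0 _ _ (by first | (simp only [hB1, hA2, hB2]; module) | module) (by rw [esq']; norm_num [Fin.sum_univ_two, P])
    · exact main 0 1 _ _ (by first | (simp only [hB1, hA2, hB2]; module) | module) (by rw [esq']; norm_num [Fin.sum_univ_two, P])
    · exact main 2 (-1) _ _ (by first | (simp only [hB1, hA2, hB2]; module) | module) (by rw [esq']; norm_num [Fin.sum_univ_two, P])
    · exact main 1 1 _ _ (by first | (simp only [hB1, hA2, hB2]; module) | module) (by rw [esq']; norm_num [Fin.sum_univ_two, P])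
    · exact main 0 0 _ _ (by first | (simp only [hB1, hA2, hB2]; module) | module) (by rw [esq']; norm_num [Fin.sum_univ_two, P])
  · -- CliqueFree 3
    have hcol : (completeBipartiteGraph (Fin 3) (Fin 3)).Colorable 2 := by
      refine ⟨SimpleGraph.Coloring.mk (fun v => if v.isLeft then (0 : Fin 2) else 1) ?_⟩
      rintro (a | a) (b | b) hadj <;> simp_all
    exact hcol.cliqueFree (by norm_num)
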